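/- Let p be a prime and let A be a sequence (multiset) of p−1 nonzero elements of the cyclic group Z_p. Then S_A ∪ {0} = Z_p, i.e., every nonzero element of Z_p is a sum of a nonempty subsequence of A. -/
import Mathlib

open Pointwise

/-- The set of sums of nonempty subsequences of the multiset `A`. -/
def msubseqSums {G : Type*} [AddCommMonoid G] (A : Multiset G) : Set G :=
  {x | ∃ B : Multiset G, B ≤ A ∧ B ≠ 0 ∧ B.sum = x}

def TT {G : Type*} [AddCommMonoid G] [DecidableEq G] (A : Multiset G) : Finset G :=
  (A.map fun a => ({0, a} : Finset G)).sum

lemma TT_zero {G : Type*} [AddCommMonoid G] [DecidableEq G] :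
    TT (0 : Multiset G) = {0} := by
  simp [TT]
  rfl

lemma TT_cons {G : Type*} [AddCommMonoid G] [DecidableEq G] (a : G) (A : Multiset G) :
    TT (a ::ₘ A) = ({0, a} : Finset G) + TT A := by
  simp [TT]

lemma mem_TT {G : Type*} [AddCommMonoid G] [DecidableEq G] {A : Multiset G} {x : G} :
    x ∈ TT A ↔ ∃ B ≤ A, B.sum = x := by
  induction A using Multiset.induction generalizing x with
  | empty =>
    rw [TT_zero]
    simp only [Finset.mem_singleton]
    constructor
    · rintro rfl; exact ⟨0, le_refl _, rfl⟩
    · rintro ⟨B, hB, rfl⟩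
      rw [Multiset.le_zero] at hB
      simp [hB]
  | cons a A ih =>
    rw [TT_cons, Finset.mem_add]
    constructor
    · rintro ⟨y, hy, z, hz, rfl⟩
      obtain ⟨B, hB, rfl⟩ := ih.1 hz
      simp only [Finset.mem_insert, Finset.mem_singleton] at hy
      rcases hy with rfl | rfl
      · exact ⟨B, le_trans hB (Multiset.le_cons_self _ _), by simp⟩
      · exact ⟨y ::ₘ B, Multiset.cons_le_cons _ hB, by simp⟩
    · rintro ⟨B, hB, rfl⟩
      by_cases hmem : a ∈ B
      · obtain ⟨B', rfl⟩ := Multiset.exists_cons_of_mem hmem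
        rw [Multiset.cons_le_cons_iff] at hB
        exact ⟨a, by simp, B'.sum, ih.2 ⟨B', hB, rfl⟩, by simp⟩
      · rw [Multiset.le_cons_of_notMem hmem] at hB
        exact ⟨0, by simp, B.sum, ih.2 ⟨B, hB, rfl⟩, by simp⟩

lemma card_TT (p : ℕ) (hp : p.Prime) (A : Multiset (ZMod p))
    (hzero : ∀ a ∈ A, a ≠ 0) : min p (Multiset.card A + 1) ≤ (TT A).card := by
  haveI : Fact p.Prime := ⟨hp⟩
  induction A using Multiset.induction with
  | empty =>
    rw [TT_zero]
    simp
  | cons a A ih =>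
    have ha : a ≠ 0 := hzero a (Multiset.mem_cons_self _ _)
    have ihA := ih (fun b hb => hzero b (Multiset.mem_cons_of_mem hb))
    have hsub : TT A ⊆ TT (a ::ₘ A) := by
      intro x hx
      rw [TT_cons, Finset.mem_add]
      exact ⟨0, by simp, x, hx, by simp⟩
    by_cases hcl : ∀ x ∈ TT A, a + x ∈ TT A
    · -- TT A is closed under adding a, hence it is everything
      have h0 : (0 : ZMod p) ∈ TT A := mem_TT.2 ⟨0, by simp, rfl⟩
      have hn : ∀ n : ℕ, (n : ZMod p) * a ∈ TT A := by
        intro n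
        induction n with
        | zero => simpa using h0
        | succ n ihn =>
          push_cast
          rw [add_mul, one_mul, add_comm]
          exact hcl _ ihn
      have huniv : TT A = Finset.univ := by
        apply Finset.eq_univ_of_forall
        intro y
        obtain ⟨n, hn'⟩ := ZMod.natCast_zmod_surjective (n := p) (y * a⁻¹)
        have := hn n
        rw [hn', mul_assoc, inv_mul_cancel₀ ha, mul_one] at this
        exact this
      have : (TT A).card = p := by
        rw [huniv, Finset.card_univ, ZMod.card]
      calc min p (Multiset.card (a ::ₘ A) + 1) ≤ p := min_le_left _ _
        _ = (TT A).card := this.symm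
        _ ≤ (TT (a ::ₘ A)).card := Finset.card_le_card hsub
    · push_neg at hcl
      obtain ⟨x, hx, hax⟩ := hcl
      have hmem : a + x ∈ TT (a ::ₘ A) := by
        rw [TT_cons, Finset.mem_add]
        exact ⟨a, by simp, x, hx, rfl⟩
      have hins : insert (a + x) (TT A) ⊆ TT (a ::ₘ A) := by
        intro y hy
        rcases Finset.mem_insert.1 hy with rfl | hy
        · exact hmem
        · exact hsub hy
      have hcard : (TT A).card + 1 ≤ (TT (a ::ₘ A)).card := by
        calc (TT A).card + 1 = (insert (a + x) (TT A)).card := by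
              rw [Finset.card_insert_of_notMem hax]
          _ ≤ _ := Finset.card_le_card hins
      have := ihA
      simp only [Multiset.card_cons]
      omega

theorem stmt_9 (p : ℕ) (hp : p.Prime) (A : Multiset (ZMod p))
    (hcard : Multiset.card A = p - 1) (hzero : ∀ a ∈ A, a ≠ 0) :
    msubseqSums A ∪ {0} = Set.univ := by
  haveI : Fact p.Prime := ⟨hp⟩
  have hp1 : 1 ≤ p := hp.pos
  have hmin : min p (Multiset.card A + 1) = p := by
    rw [hcard]; omega
  have hcardT := card_TT p hp A hzero
  rw [hmin] at hcardT
  have huniv : TT A = Finset.univ := by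
    apply Finset.eq_univ_of_card
    have : (TT A).card ≤ Fintype.card (ZMod p) := Finset.card_le_univ _
    rw [ZMod.card] at this
    rw [ZMod.card]
    omega
  ext x
  simp only [Set.mem_univ, iff_true]
  have hx : x ∈ TT A := by rw [huniv]; exact Finset.mem_univ x
  obtain ⟨B, hB, hsum⟩ := mem_TT.1 hx
  by_cases hB0 : B = 0
  · right
    subst hB0
    simp at hsum
    simp [hsum.symm]
  · left
    exact ⟨B, hB, hB0, hsum⟩
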